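/- arXiv:2004.02500 — 2 statements merged into one kernel-verified Lean document; each statement's English description precedes it below -/
import Mathlib

section
/- Define w(n) = ∑_{m ≥ 1} μ(m)·φ₁(mn)·φ₂(mn)·ϑ(m²n²)/m². Then w(n) admits the Euler-product evaluation w(n) = ∏_{p ∤ n}(1 - ϑ(p²)/(p(p+2))) · ∏_{p^k ∥ n}(ϑ(p^{2k}) - ϑ(p^{2k+2})/p²)·(1 + 2/p)^{-1}. -/
open Finset ArithmeticFunction
open scoped ArithmeticFunction.Moebius

/-- The number of roots of `F(x) = x³ + Ax + B` modulo `n`. -/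
noncomputable def theta (A B : ℤ) (n : ℕ) : ℕ :=
  Nat.card {ρ : ZMod n // ρ ^ 3 + (A : ZMod n) * ρ + (B : ZMod n) = 0}

/-- `φ₁(m) = ∏_{p | m} (1 + 1/p)⁻¹`. -/
noncomputable def phi1 (m : ℕ) : ℝ :=
  ∏ p ∈ m.primeFactors, (1 + (p : ℝ)⁻¹)⁻¹

/-- `φ₂(m) = ∏_{p | m} (1 + 1/(p+1))⁻¹`. -/
noncomputable def phi2 (m : ℕ) : ℝ :=
  ∏ p ∈ m.primeFactors, (1 + ((p : ℝ) + 1)⁻¹)⁻¹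

set_option linter.unusedSectionVars false

lemma theta_one (A B : ℤ) : theta A B 1 = 1 := by
  unfold theta
  have : ∀ ρ : ZMod 1, ρ ^ 3 + (A : ZMod 1) * ρ + (B : ZMod 1) = 0 := fun ρ => Subsingleton.elim _ _
  rw [Nat.card_eq_one_iff_unique]
  exact ⟨⟨fun a b => Subtype.ext (Subsingleton.elim _ _)⟩, ⟨0, this 0⟩⟩

lemma theta_mul (A B : ℤ) {a b : ℕ} (h : Nat.Coprime a b) :
    theta A B (a * b) = theta A B a * theta A B b := by
  unfold theta
  rw [← Nat.card_prod]
  apply Nat.card_congr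
  have e := ZMod.chineseRemainder h
  refine (Equiv.subtypeEquiv e.toEquiv fun ρ => ?_).trans
    (Equiv.subtypeProdEquivProd
      (p := fun x : ZMod a => x ^ 3 + (A : ZMod a) * x + (B : ZMod a) = 0)
      (q := fun x : ZMod b => x ^ 3 + (A : ZMod b) * x + (B : ZMod b) = 0))
  constructor
  · intro hρ
    have := congrArg e hρ
    rw [map_add, map_add, map_mul, map_pow, map_intCast, map_intCast, _root_.map_zero] at this
    rw [Prod.ext_iff] at this
    simpa using this
  · rintro ⟨h1, h2⟩
    apply e.injective
    rw [map_add, map_add, map_mul, map_pow, map_intCast, map_intCast, _root_.map_zero]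
    rw [Prod.ext_iff]
    simpa using ⟨h1, h2⟩

lemma theta_eq_zero_of_dvd (A B : ℤ) {d k : ℕ} (hd : theta A B d = 0) (hdvd : d ∣ k)
    (hk : k ≠ 0) : theta A B k = 0 := by
  have hd0 : d ≠ 0 := fun h => hk (by simpa [h] using hdvd)
  haveI : NeZero d := ⟨hd0⟩
  haveI : NeZero k := ⟨hk⟩
  unfold theta at *
  rw [Nat.card_eq_zero] at hd ⊢
  rcases hd with hd | hd
  · left
    constructor
    rintro ⟨ρ, hρ⟩
    refine hd.false (α := _) ⟨ZMod.castHom hdvd (ZMod d) ρ, ?_⟩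
    have := congrArg (ZMod.castHom hdvd (ZMod d)) hρ
    simpa [map_add, map_mul, map_pow, map_intCast] using this
  · exact absurd hd (Finite.of_fintype _).not_infinite

section prime
variable (A B : ℤ) {p : ℕ} [hfp : Fact p.Prime]

lemma deriv_ne_zero (hΔ : ((4*A^3+27*B^2 : ℤ) : ZMod p) ≠ 0) {r : ZMod p}
    (hr : r ^ 3 + (A : ZMod p) * r + (B : ZMod p) = 0) :
    3 * r ^ 2 + (A : ZMod p) ≠ 0 := by
  intro h0
  apply hΔ
  have key : ((4*A^3+27*B^2 : ℤ) : ZMod p)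
      = (27*(B:ZMod p) - 18*(A:ZMod p)*r) * (r^3 + (A:ZMod p)*r + (B:ZMod p))
        + (6*(A:ZMod p)*r^2 - 9*(B:ZMod p)*r + 4*(A:ZMod p)^2) * (3*r^2 + (A:ZMod p)) := by
    push_cast
    ring
  rw [key, hr, h0, mul_zero, mul_zero, add_zero]

lemma theta_prime_le_three : theta A B p ≤ 3 := by
  classical
  have hp : p.Prime := Fact.out
  set P : Polynomial (ZMod p) := Polynomial.X ^ 3 + (Polynomial.C (A : ZMod p) * Polynomial.X
    + Polynomial.C (B : ZMod p)) with hP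
  have hq : (Polynomial.C (A : ZMod p) * Polynomial.X + Polynomial.C (B : ZMod p)).degree < (3 : WithBot ℕ) := by
    apply lt_of_le_of_lt (Polynomial.degree_add_le _ _)
    apply max_lt
    · exact lt_of_le_of_lt (Polynomial.degree_C_mul_X_le _) (by norm_num)
    · exact lt_of_le_of_lt Polynomial.degree_C_le (by norm_num)
  have hmonic : P.Monic := Polynomial.monic_X_pow_add hq
  have hne : P ≠ 0 := hmonic.ne_zero
  have hdeg : P.natDegree ≤ 3 := by
    apply le_trans (Polynomial.natDegree_add_le _ _)
    simp only [Polynomial.natDegree_X_pow]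
    apply max_le le_rfl
    apply le_trans (Polynomial.natDegree_add_le _ _)
    apply max_le
    · exact le_trans (Polynomial.natDegree_C_mul_le _ _) (by simp)
    · simp
  have hsub : {ρ : ZMod p | ρ ^ 3 + (A : ZMod p) * ρ + (B : ZMod p) = 0}
      ⊆ ↑P.roots.toFinset := by
    intro ρ hρ
    simp only [Multiset.mem_toFinset, Finset.coe_sort_coe, Finset.mem_coe]
    rw [Polynomial.mem_roots hne, Polynomial.IsRoot.def, hP]
    simp only [Polynomial.eval_add, Polynomial.eval_pow, Polynomial.eval_X, Polynomial.eval_mul,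
      Polynomial.eval_C]
    have : ρ ^ 3 + (A : ZMod p) * ρ + (B : ZMod p) = 0 := hρ
    linear_combination this
  calc theta A B p = Set.ncard {ρ : ZMod p | ρ ^ 3 + (A : ZMod p) * ρ + (B : ZMod p) = 0} := by
        rw [theta, ← Nat.card_coe_set_eq]
        rfl
    _ ≤ Set.ncard (↑P.roots.toFinset : Set (ZMod p)) := Set.ncard_le_ncard hsub (P.roots.toFinset.finite_toSet)
    _ = P.roots.toFinset.card := Set.ncard_coe_finset _
    _ ≤ Multiset.card P.roots := Multiset.toFinset_card_le _
    _ ≤ P.natDegree := Polynomial.card_roots' P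
    _ ≤ 3 := hdeg

-- helper facts about ZMod p^2
lemma exists_p_mul {c : ZMod (p^2)} (hc : ZMod.castHom (dvd_pow_self p two_ne_zero) (ZMod p) c = 0) :
    ∃ z : ZMod (p^2), c = (p : ZMod (p^2)) * z := by
  haveI : NeZero (p^2) := ⟨pow_ne_zero 2 hfp.out.ne_zero⟩
  have hval : ((c.val : ℕ) : ZMod p) = 0 := by
    rw [← hc]
    rw [ZMod.castHom_apply]
    rw [← ZMod.natCast_val]
  rw [ZMod.natCast_eq_zero_iff] at hval
  obtain ⟨k, hk⟩ := hval
  refine ⟨(k : ZMod (p^2)), ?_⟩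
  have : c = ((c.val : ℕ) : ZMod (p^2)) := (ZMod.natCast_rightInverse c).symm
  rw [this, hk]
  push_cast
  ring

lemma isUnit_of_cast_ne_zero {u : ZMod (p^2)}
    (hu : ZMod.castHom (dvd_pow_self p two_ne_zero) (ZMod p) u ≠ 0) : IsUnit u := by
  haveI : NeZero (p^2) := ⟨pow_ne_zero 2 hfp.out.ne_zero⟩
  have hval : ¬ (p ∣ u.val) := by
    intro hdvd
    apply hu
    rw [ZMod.castHom_apply, ← ZMod.natCast_val u]
    show ((u.val : ℕ) : ZMod p) = 0
    rwa [ZMod.natCast_eq_zero_iff]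
  have : u = ((u.val : ℕ) : ZMod (p^2)) := (ZMod.natCast_rightInverse u).symm
  rw [this]
  rw [ZMod.isUnit_iff_coprime]
  exact Nat.Coprime.pow_right 2 ((Nat.Prime.coprime_iff_not_dvd hfp.out).mpr hval).symm

lemma p_sq_zero : ((p : ZMod (p^2)) * (p : ZMod (p^2))) = 0 := by
  have : ((p^2 : ℕ) : ZMod (p^2)) = 0 := ZMod.natCast_self _
  push_cast at this
  linear_combination this


lemma theta_sq_eq (hΔ : ((4*A^3+27*B^2 : ℤ) : ZMod p) ≠ 0) :
    theta A B (p^2) = theta A B p := by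
  classical
  haveI : NeZero p := ⟨hfp.out.ne_zero⟩
  set π : ZMod (p^2) →+* ZMod p := ZMod.castHom (dvd_pow_self p two_ne_zero) (ZMod p) with hπ
  have hπp : π (p : ZMod (p^2)) = 0 := by
    rw [map_natCast, ZMod.natCast_self]
  have hmap : ∀ x : ZMod (p^2), x ^ 3 + (A : ZMod (p^2)) * x + (B : ZMod (p^2)) = 0 →
      (π x) ^ 3 + (A : ZMod p) * (π x) + (B : ZMod p) = 0 := by
    intro x hx
    have := congrArg π hx
    simpa [map_add, map_mul, map_pow, map_intCast] using this
  set φ : {ρ : ZMod (p^2) // ρ ^ 3 + (A : ZMod (p^2)) * ρ + (B : ZMod (p^2)) = 0} →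
      {ρ : ZMod p // ρ ^ 3 + (A : ZMod p) * ρ + (B : ZMod p) = 0} :=
    fun x => ⟨π x.1, hmap x.1 x.2⟩ with hφ
  have hderiv : ∀ x : ZMod (p^2), (π x) ^ 3 + (A : ZMod p) * (π x) + (B : ZMod p) = 0 →
      IsUnit (3 * x ^ 2 + (A : ZMod (p^2))) := by
    intro x hx
    apply isUnit_of_cast_ne_zero
    have : π (3 * x ^ 2 + (A : ZMod (p^2))) = 3 * (π x) ^ 2 + (A : ZMod p) := by
      push_cast [map_add, map_mul, map_pow, map_intCast, map_ofNat]
      ring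
    rw [this]
    exact deriv_ne_zero A B hΔ hx
  have hinj : Function.Injective φ := by
    rintro ⟨x, hx⟩ ⟨y, hy⟩ hxy
    simp only [hφ, Subtype.mk.injEq] at hxy ⊢
    have hc : π (y - x) = 0 := by rw [map_sub, hxy, sub_self]
    obtain ⟨z, hz⟩ := exists_p_mul (p := p) hc
    have hy' : y = x + (p : ZMod (p^2)) * z := by rw [← hz]; ring
    have hexp : y ^ 3 + (A : ZMod (p^2)) * y + (B : ZMod (p^2))
        = (x ^ 3 + (A : ZMod (p^2)) * x + (B : ZMod (p^2)))
          + ((p : ZMod (p^2)) * z) * (3 * x ^ 2 + (A : ZMod (p^2)))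
          + ((p : ZMod (p^2)) * (p : ZMod (p^2))) * (z * z * (3 * x + (p : ZMod (p^2)) * z)) := by
      rw [hy']; ring
    rw [hy, hx, p_sq_zero, zero_add, zero_mul, add_zero] at hexp
    have hu : IsUnit (3 * x ^ 2 + (A : ZMod (p^2))) := hderiv x (hmap x hx)
    have hz0 : (p : ZMod (p^2)) * z = 0 := (hu.mul_left_eq_zero).mp hexp.symm
    rw [hy', hz0, add_zero]
  have hsurj : Function.Surjective φ := by
    rintro ⟨r, hr⟩
    set x0 : ZMod (p^2) := ((r.val : ℕ) : ZMod (p^2)) with hx0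
    have hπx0 : π x0 = r := by
      rw [hx0, map_natCast]
      exact ZMod.natCast_rightInverse r
    have hFx0cast : π (x0 ^ 3 + (A : ZMod (p^2)) * x0 + (B : ZMod (p^2))) = 0 := by
      rw [map_add, map_add, map_mul, map_pow, map_intCast, map_intCast, hπx0]
      exact hr
    obtain ⟨s, hs⟩ := exists_p_mul (p := p) hFx0cast
    have hu : IsUnit (3 * x0 ^ 2 + (A : ZMod (p^2))) := hderiv x0 (by rw [hπx0]; exact hr)
    obtain ⟨w, hw⟩ := hu
    set t : ZMod (p^2) := -(s * (↑w⁻¹ : ZMod (p^2))) with ht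
    set x : ZMod (p^2) := x0 + (p : ZMod (p^2)) * t with hxdef
    have htu : t * (3 * x0 ^ 2 + (A : ZMod (p^2))) = -s := by
      rw [ht, ← hw]
      have : (↑w⁻¹ : ZMod (p^2)) * ↑w = 1 := w.inv_mul
      calc -(s * (↑w⁻¹ : ZMod (p^2))) * ↑w = -(s * ((↑w⁻¹ : ZMod (p^2)) * ↑w)) := by ring
        _ = -s := by rw [this, mul_one]
    have hFx : x ^ 3 + (A : ZMod (p^2)) * x + (B : ZMod (p^2)) = 0 := by
      have hexp : x ^ 3 + (A : ZMod (p^2)) * x + (B : ZMod (p^2))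
          = (x0 ^ 3 + (A : ZMod (p^2)) * x0 + (B : ZMod (p^2)))
            + (p : ZMod (p^2)) * (t * (3 * x0 ^ 2 + (A : ZMod (p^2))))
            + ((p : ZMod (p^2)) * (p : ZMod (p^2))) * (t * t * (3 * x0 + (p : ZMod (p^2)) * t)) := by
        rw [hxdef]; ring
      rw [hexp, p_sq_zero, zero_mul, add_zero, hs, htu]
      ring
    refine ⟨⟨x, hFx⟩, ?_⟩
    simp only [hφ, Subtype.mk.injEq]
    rw [hxdef, map_add, map_mul, hπp, hπx0, zero_mul, add_zero]
  exact Nat.card_eq_of_bijective φ ⟨hinj, hsurj⟩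
end prime

section setup
variable (A B : ℤ) (n : ℕ)

/-- local factor -/
noncomputable def Lp (p : ℕ) : ℝ :=
  if p ∣ n then
    -(theta A B (p ^ (2 * n.factorization p + 2)) : ℝ)
      / ((p : ℝ) ^ 2 * (theta A B (p ^ (2 * n.factorization p)) : ℝ))
  else -(theta A B (p ^ 2) : ℝ) / ((p : ℝ) * ((p : ℝ) + 2))

noncomputable def gg (m : ℕ) : ℝ :=
  if Squarefree m then ∏ p ∈ m.primeFactors, Lp A B n p else 0

noncomputable def gg0 (m : ℕ) : ℝ := if m.Coprime n then gg A B n m else 0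

lemma gg_one : gg A B n 1 = 1 := by simp [gg, squarefree_one]

lemma gg_not_squarefree {m : ℕ} (hm : ¬ Squarefree m) : gg A B n m = 0 := by
  rw [gg, if_neg hm]

lemma gg_zero : gg A B n 0 = 0 := by simp [gg, not_squarefree_zero]

lemma gg0_one : gg0 A B n 1 = 1 := by simp [gg0, Nat.coprime_one_left, gg_one]

lemma gg0_zero : gg0 A B n 0 = 0 := by simp [gg0, gg_zero]

lemma gg_mul {a b : ℕ} (h : Nat.Coprime a b) :
    gg A B n (a * b) = gg A B n a * gg A B n b := by
  by_cases hab : Squarefree (a * b)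
  · have h2 := (Nat.squarefree_mul h).mp hab
    rw [gg, gg, gg, if_pos hab, if_pos h2.1, if_pos h2.2,
      Nat.primeFactors_mul h2.1.ne_zero h2.2.ne_zero,
      Finset.prod_union h.disjoint_primeFactors]
  · rw [gg_not_squarefree A B n hab]
    rcases (not_and_or.mp (fun hc => hab ((Nat.squarefree_mul h).mpr hc))) with hc | hc
    · rw [gg_not_squarefree A B n hc, zero_mul]
    · rw [gg_not_squarefree A B n hc, mul_zero]

lemma gg0_mul {a b : ℕ} (h : Nat.Coprime a b) :
    gg0 A B n (a * b) = gg0 A B n a * gg0 A B n b := by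
  rcases Nat.coprime_mul_iff_left (k := n) (m := a) (n := b) with hiff
  by_cases hc : (a * b).Coprime n
  · have h2 := hiff.mp hc
    rw [gg0, gg0, gg0, if_pos hc, if_pos h2.1, if_pos h2.2, gg_mul A B n h]
  · rw [show gg0 A B n (a * b) = 0 from by rw [gg0, if_neg hc]]
    rcases (not_and_or.mp (fun hc2 => hc (hiff.mpr hc2))) with hc2 | hc2
    · rw [show gg0 A B n a = 0 from by rw [gg0, if_neg hc2], zero_mul]
    · rw [show gg0 A B n b = 0 from by rw [gg0, if_neg hc2], mul_zero]

lemma gg_prime_pow {p : ℕ} (hp : p.Prime) {e : ℕ} (he : 2 ≤ e) : gg A B n (p ^ e) = 0 := by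
  rw [gg, if_neg]
  intro hsq
  have : p * p ∣ p ^ e := by
    have : p ^ 2 ∣ p ^ e := pow_dvd_pow p he
    rwa [sq] at this
  exact hp.ne_one (Nat.isUnit_iff.mp (hsq p this))

lemma gg_prime {p : ℕ} (hp : p.Prime) : gg A B n p = Lp A B n p := by
  rw [gg, if_pos hp.squarefree, hp.primeFactors, Finset.prod_singleton]

lemma tsum_gg_pow {p : ℕ} (hp : p.Prime) :
    ∑' e : ℕ, gg A B n (p ^ e) = 1 + Lp A B n p := by
  rw [tsum_eq_sum (s := {0, 1}) (fun e he => by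
    rw [Finset.mem_insert, Finset.mem_singleton] at he
    exact gg_prime_pow A B n hp (by omega))]
  rw [Finset.sum_insert (by norm_num), Finset.sum_singleton, pow_zero, pow_one,
    gg_one, gg_prime A B n hp]

lemma tsum_gg0_pow {p : ℕ} (hp : p.Prime) :
    ∑' e : ℕ, gg0 A B n (p ^ e) = if p ∣ n then 1 else 1 + Lp A B n p := by
  have hz : ∀ e : ℕ, 2 ≤ e → gg0 A B n (p ^ e) = 0 := by
    intro e he
    simp [gg0, gg_prime_pow A B n hp he]
  rw [tsum_eq_sum (s := {0, 1}) (fun e he => by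
    rw [Finset.mem_insert, Finset.mem_singleton] at he
    exact hz e (by omega))]
  rw [Finset.sum_insert (by norm_num), Finset.sum_singleton, pow_zero, pow_one, gg0_one]
  by_cases hdvd : p ∣ n
  · rw [if_pos hdvd, gg0, if_neg, add_zero]
    exact fun hco => hp.ne_one (Nat.Coprime.eq_one_of_dvd hco hdvd)
  · rw [if_neg hdvd, gg0, if_pos ((Nat.Prime.coprime_iff_not_dvd hp).mpr hdvd),
      gg_prime A B n hp]


noncomputable def cp (p : ℕ) : ℝ := (1 + (p : ℝ)⁻¹)⁻¹ * (1 + ((p : ℝ) + 1)⁻¹)⁻¹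

lemma cp_eq {p : ℕ} (hp : 0 < p) : cp p = (p : ℝ) / ((p : ℝ) + 2) := by
  have h0 : (0:ℝ) < (p:ℝ) := by exact_mod_cast hp
  have h1 : ((p:ℝ)) ≠ 0 := by positivity
  have h2 : ((p:ℝ)) + 1 ≠ 0 := by positivity
  have h3 : ((p:ℝ)) + 2 ≠ 0 := by positivity
  have e1 : (1 + (p : ℝ)⁻¹) ≠ 0 := by positivity
  have e2 : (1 + ((p : ℝ) + 1)⁻¹) ≠ 0 := by positivity
  rw [cp]
  rw [← mul_inv, eq_div_iff h3, inv_mul_eq_div, div_eq_iff (by positivity)]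
  field_simp
  ring

lemma theta_fact {k : ℕ} (hk : k ≠ 0) :
    (theta A B (k ^ 2) : ℝ)
      = ∏ p ∈ k.primeFactors, (theta A B (p ^ (2 * k.factorization p)) : ℝ) := by
  have hmult : ∀ x y : ℕ, Nat.Coprime x y →
      ((theta A B (x * y) : ℝ)) = (theta A B x : ℝ) * (theta A B y : ℝ) := by
    intro x y h
    exact_mod_cast theta_mul A B h
  have h := Nat.multiplicative_factorization (fun j => (theta A B j : ℝ)) hmult
    (by exact_mod_cast theta_one A B) (pow_ne_zero 2 hk)
  rw [h, Nat.factorization_pow, Finsupp.prod]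
  rw [Finsupp.support_smul_eq (by norm_num)]
  rw [Nat.support_factorization]
  apply Finset.prod_congr rfl
  intro p hp
  rw [Finsupp.smul_apply, smul_eq_mul]

lemma phi_mul_phi (k : ℕ) : phi1 k * phi2 k = ∏ p ∈ k.primeFactors, cp p := by
  rw [phi1, phi2, ← Finset.prod_mul_distrib]
  rfl
end setup


section key
variable (A B : ℤ) (n : ℕ)

lemma term_eq (hn : n ≠ 0)
    (hθ : ∀ p ∈ n.primeFactors, (theta A B (p ^ (2 * n.factorization p)) : ℝ) ≠ 0) (m : ℕ) :
    (μ m : ℝ) * phi1 (m * n) * phi2 (m * n) * (theta A B ((m * n) ^ 2) : ℝ) / (m : ℝ) ^ 2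
      = (∏ p ∈ n.primeFactors, (cp p * (theta A B (p ^ (2 * n.factorization p)) : ℝ)))
        * gg A B n m := by
  classical
  by_cases hsq : Squarefree m
  · have hm0 : m ≠ 0 := hsq.ne_zero
    set M := m.primeFactors with hM
    set N := n.primeFactors with hN
    set U := M ∪ N with hUdef
    have hMU : M ⊆ U := Finset.subset_union_left
    have hNU : N ⊆ U := Finset.subset_union_right
    have hU : (m * n).primeFactors = U := Nat.primeFactors_mul hm0 hn
    set T : ℕ → ℕ → ℝ := fun p j => (theta A B (p ^ j) : ℝ) with hT
    have h1 : (μ m : ℝ) = ∏ p ∈ M, (-1 : ℝ) := by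
      rw [moebius_apply_of_squarefree hsq, Finset.prod_const]
      push_cast
      congr 1
      rw [cardFactors_apply, hM, Nat.primeFactors,
        List.toFinset_card_of_nodup ((Nat.squarefree_iff_nodup_primeFactorsList hm0).mp hsq)]
    have h2 : phi1 (m * n) * phi2 (m * n) = ∏ p ∈ U, cp p := by
      rw [phi_mul_phi, hU]
    have h3 : (theta A B ((m * n) ^ 2) : ℝ)
        = ∏ p ∈ U, T p (2 * (m.factorization p + n.factorization p)) := by
      rw [theta_fact A B (mul_ne_zero hm0 hn), hU]
      apply Finset.prod_congr rfl
      intro p hp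
      rw [hT]
      norm_num
      rw [Nat.factorization_mul hm0 hn]
      rfl
    have h4 : ((m : ℝ)) ^ 2 = ∏ p ∈ M, ((p : ℝ)) ^ 2 := by
      conv_lhs => rw [← Nat.prod_primeFactors_of_squarefree hsq]
      push_cast
      rw [← Finset.prod_pow]
    have hext : ∀ (V : Finset ℕ), V ⊆ U → ∀ (x : ℕ → ℝ),
        ∏ p ∈ V, x p = ∏ p ∈ U, (if p ∈ V then x p else 1) := by
      intro V hVU x
      calc ∏ p ∈ V, x p = ∏ p ∈ V, (if p ∈ V then x p else 1) :=
            Finset.prod_congr rfl (fun p hp => (if_pos hp).symm)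
        _ = ∏ p ∈ U, (if p ∈ V then x p else 1) :=
            Finset.prod_subset hVU (fun p _ hp => if_neg hp)
    rw [mul_assoc ((μ m : ℝ)), h2, h1, h3, div_eq_mul_inv, h4, ← Finset.prod_inv_distrib,
      gg, if_pos hsq, ← hM,
      hext M hMU (fun p => (-1 : ℝ)), hext M hMU (fun p => ((p:ℝ) ^ 2)⁻¹),
      hext N hNU (fun p => cp p * T p (2 * n.factorization p)) , hext M hMU (Lp A B n),
      ← Finset.prod_mul_distrib, ← Finset.prod_mul_distrib, ← Finset.prod_mul_distrib,
      ← Finset.prod_mul_distrib]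
    apply Finset.prod_congr rfl
    intro p hp
    have hprime : p.Prime := by
      rcases Finset.mem_union.mp hp with h | h
      · exact Nat.prime_of_mem_primeFactors h
      · exact Nat.prime_of_mem_primeFactors h
    have hppos : (0:ℝ) < (p:ℝ) := by exact_mod_cast hprime.pos
    by_cases hMm : p ∈ M
    · have hvm : m.factorization p = 1 := by
        have hle : m.factorization p ≤ 1 := Squarefree.natFactorization_le_one p hsq
        have hpos : 0 < m.factorization p :=
          Nat.Prime.factorization_pos_of_dvd hprime hm0 (Nat.dvd_of_mem_primeFactors hMm)
        omega
      by_cases hNm : p ∈ N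
      · have hdvd : p ∣ n := Nat.dvd_of_mem_primeFactors hNm
        have hT0 : T p (2 * n.factorization p) ≠ 0 := hθ p hNm
        rw [if_pos hMm, if_pos hNm, if_pos hMm, if_pos hMm, hvm, Lp, if_pos hdvd,
          show 2 * (1 + n.factorization p) = 2 * n.factorization p + 2 by ring]
        rw [hT] at hT0 ⊢
        simp only []
        field_simp
      · have he : n.factorization p = 0 :=
          Finsupp.notMem_support_iff.mp (by rwa [Nat.support_factorization])
        have hnd : ¬ p ∣ n := fun hd => hNm (Nat.mem_primeFactors.mpr ⟨hprime, hd, hn⟩)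
        rw [if_pos hMm, if_neg hNm, if_pos hMm, if_pos hMm, hvm, he, Lp, if_neg hnd,
          show 2 * (1 + 0) = 2 by ring, cp_eq hprime.pos]
        rw [hT]
        simp only [one_mul]
        have h2 : ((p:ℝ)) + 2 ≠ 0 := by positivity
        field_simp
    · have hvm : m.factorization p = 0 :=
        Finsupp.notMem_support_iff.mp (by rwa [Nat.support_factorization])
      have hNm : p ∈ N := by
        rcases Finset.mem_union.mp hp with h | h
        · exact absurd h hMm
        · exact h
      rw [if_neg hMm, if_pos hNm, if_neg hMm, if_neg hMm, hvm, zero_add]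
      ring
  · rw [moebius_eq_zero_of_not_squarefree hsq, gg_not_squarefree A B n hsq]
    push_cast
    simp
end key

section summable
variable (A B : ℤ) (n : ℕ) (hΔ : (4*A^3+27*B^2 : ℤ) ≠ 0) (hn : n ≠ 0)

include hΔ hn

lemma Lp_good_bound {p : ℕ} (hp : p.Prime) (hpD : ¬ p ∣ n * (4*A^3+27*B^2 : ℤ).natAbs) :
    |Lp A B n p| ≤ 3 / (p : ℝ) ^ 2 := by
  haveI : Fact p.Prime := ⟨hp⟩
  have hpn : ¬ p ∣ n := fun h => hpD (h.mul_right _)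
  have hpΔ : ¬ p ∣ (4*A^3+27*B^2 : ℤ).natAbs := fun h => hpD (h.mul_left _)
  have hΔp : ((4*A^3+27*B^2 : ℤ) : ZMod p) ≠ 0 := by
    intro h0
    rw [ZMod.intCast_zmod_eq_zero_iff_dvd] at h0
    rw [Int.natCast_dvd] at h0
    exact hpΔ h0
  have hθ : theta A B (p^2) ≤ 3 := by
    rw [theta_sq_eq A B hΔp]
    exact theta_prime_le_three A B
  have hppos : (0:ℝ) < (p:ℝ) := by exact_mod_cast hp.pos
  rw [Lp, if_neg hpn, abs_div, abs_neg, abs_of_nonneg (by positivity),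
    abs_of_nonneg (by positivity)]
  apply div_le_div₀ (by norm_num) (by exact_mod_cast hθ) (by positivity)
  nlinarith

lemma sum_q_bound (T : Finset ℕ) (hT : ∀ p ∈ T, p.Prime) :
    ∑ p ∈ T, |Lp A B n p|
      ≤ (∑ p ∈ (n * (4*A^3+27*B^2 : ℤ).natAbs).primeFactors, |Lp A B n p|)
        + 3 * ∑' k : ℕ, ((k:ℝ) ^ 2)⁻¹ := by
  set D := n * (4*A^3+27*B^2 : ℤ).natAbs with hD
  have hD0 : D ≠ 0 := by
    apply mul_ne_zero hn
    simpa using hΔ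
  have hsummable : Summable (fun k : ℕ => ((k:ℝ) ^ 2)⁻¹) := by
    simpa [one_div] using (Real.summable_one_div_nat_pow (p := 2)).mpr one_lt_two
  rw [← Finset.sum_inter_add_sum_sdiff T D.primeFactors (fun p => |Lp A B n p|)]
  have h1 : ∑ p ∈ T ∩ D.primeFactors, |Lp A B n p| ≤ ∑ p ∈ D.primeFactors, |Lp A B n p| :=
    Finset.sum_le_sum_of_subset_of_nonneg Finset.inter_subset_right
      (fun p _ _ => abs_nonneg _)
  have h2 : ∑ p ∈ T \ D.primeFactors, |Lp A B n p| ≤ 3 * ∑' k : ℕ, ((k:ℝ) ^ 2)⁻¹ := by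
    calc ∑ p ∈ T \ D.primeFactors, |Lp A B n p|
        ≤ ∑ p ∈ T \ D.primeFactors, 3 * ((p:ℝ) ^ 2)⁻¹ := by
          apply Finset.sum_le_sum
          intro p hp
          have hprime := hT p (Finset.mem_sdiff.mp hp).1
          have hnD : ¬ p ∣ D := fun hd =>
            (Finset.mem_sdiff.mp hp).2 (Nat.mem_primeFactors.mpr ⟨hprime, hd, hD0⟩)
          have := Lp_good_bound A B n hΔ hn hprime hnD
          rwa [div_eq_mul_inv] at this
      _ = 3 * ∑ p ∈ T \ D.primeFactors, ((p:ℝ) ^ 2)⁻¹ := by rw [Finset.mul_sum]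
      _ ≤ 3 * ∑' k : ℕ, ((k:ℝ) ^ 2)⁻¹ := by
          apply mul_le_mul_of_nonneg_left _ (by norm_num)
          exact hsummable.sum_le_tsum _ (fun k _ => by positivity)
  linarith

lemma summable_norm_gg : Summable (fun m => ‖gg A B n m‖) := by
  classical
  set Q : ℝ := (∑ p ∈ (n * (4*A^3+27*B^2 : ℤ).natAbs).primeFactors, |Lp A B n p|)
    + 3 * ∑' k : ℕ, ((k:ℝ) ^ 2)⁻¹ with hQ
  apply summable_of_sum_le (c := Real.exp Q) (fun m => norm_nonneg _)
  intro u
  have hnorm : ∀ m : ℕ, ‖gg A B n m‖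
      = if Squarefree m then ∏ p ∈ m.primeFactors, |Lp A B n p| else 0 := by
    intro m
    rw [gg]
    split
    · rw [Real.norm_eq_abs, Finset.abs_prod]
    · simp
  set T := u.biUnion Nat.primeFactors with hTset
  calc ∑ m ∈ u, ‖gg A B n m‖
      = ∑ m ∈ u with Squarefree m, ∏ p ∈ m.primeFactors, |Lp A B n p| := by
        rw [Finset.sum_filter]
        exact Finset.sum_congr rfl fun m _ => hnorm m
    _ = ∑ s ∈ (u.filter Squarefree).image Nat.primeFactors, ∏ p ∈ s, |Lp A B n p| := by
        rw [Finset.sum_image]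
        intro x hx y hy hxy
        rw [← Nat.prod_primeFactors_of_squarefree (Finset.mem_filter.mp hx).2,
          ← Nat.prod_primeFactors_of_squarefree (Finset.mem_filter.mp hy).2, hxy]
    _ ≤ ∑ s ∈ T.powerset, ∏ p ∈ s, |Lp A B n p| := by
        apply Finset.sum_le_sum_of_subset_of_nonneg
        · intro s hs
          rw [Finset.mem_powerset]
          obtain ⟨m, hm, rfl⟩ := Finset.mem_image.mp hs
          exact Finset.subset_biUnion_of_mem Nat.primeFactors (Finset.mem_filter.mp hm).1
        · intro s _ _
          exact Finset.prod_nonneg fun p _ => abs_nonneg _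
    _ = ∏ p ∈ T, (|Lp A B n p| + 1) := by
        rw [Finset.prod_add]
        exact Finset.sum_congr rfl fun s _ => by rw [Finset.prod_const_one, mul_one]
    _ ≤ ∏ p ∈ T, Real.exp (|Lp A B n p|) := by
        apply Finset.prod_le_prod (fun p _ => by positivity)
        intro p _
        exact Real.add_one_le_exp _
    _ = Real.exp (∑ p ∈ T, |Lp A B n p|) := by rw [← Real.exp_sum]
    _ ≤ Real.exp Q := by
        apply Real.exp_le_exp.mpr
        apply sum_q_bound A B n hΔ hn
        intro p hp
        obtain ⟨m, _, hm⟩ := Finset.mem_biUnion.mp hp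
        exact Nat.prime_of_mem_primeFactors hm

lemma summable_norm_gg0 : Summable (fun m => ‖gg0 A B n m‖) := by
  apply Summable.of_nonneg_of_le (fun m => norm_nonneg _) _ (summable_norm_gg A B n hΔ hn)
  intro m
  rw [gg0]
  split
  · exact le_refl _
  · simp [norm_nonneg]
end summable

/-- Euler-product evaluation of
`w(n) = ∑_{m ≥ 1} μ(m)·φ₁(mn)·φ₂(mn)·ϑ(m²n²)/m²`:
`w(n) = ∏_{p ∤ n}(1 - ϑ(p²)/(p(p+2))) · ∏_{p^k ∥ n}(ϑ(p^{2k}) - ϑ(p^{2k+2})/p²)(1 + 2/p)⁻¹`. -/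
theorem w_euler_product (A B : ℤ) (hΔ : -(4 * A ^ 3 + 27 * B ^ 2) ≠ 0) (n : ℕ) (hn : 0 < n) :
    (∑' m : ℕ, ((moebius m : ℝ) * phi1 (m * n) * phi2 (m * n) * (theta A B ((m * n) ^ 2) : ℝ))
        / (m : ℝ) ^ 2)
      = (∏' p : {p : Nat.Primes // ¬ (p : ℕ) ∣ n},
          (1 - (theta A B ((p : ℕ) ^ 2) : ℝ) / ((p : ℕ) * ((p : ℕ) + 2))))
        * ∏ p ∈ n.primeFactors,
            ((theta A B (p ^ (2 * n.factorization p)) : ℝ)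
                - (theta A B (p ^ (2 * n.factorization p + 2)) : ℝ) / (p : ℝ) ^ 2)
              * (1 + 2 / (p : ℝ))⁻¹ := by
  classical
  have hn0 : n ≠ 0 := hn.ne'
  have hΔ' : (4 * A ^ 3 + 27 * B ^ 2 : ℤ) ≠ 0 := fun h => hΔ (by rw [h, neg_zero])
  by_cases hz : theta A B (n ^ 2) = 0
  · -- zero case
    have hLHS : (∑' m : ℕ, ((μ m : ℝ) * phi1 (m * n) * phi2 (m * n)
        * (theta A B ((m * n) ^ 2) : ℝ)) / (m : ℝ) ^ 2) = 0 := by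
      rw [← tsum_zero (β := ℕ) (α := ℝ)]
      apply tsum_congr
      intro m
      rcases eq_or_ne m 0 with rfl | hm0
      · simp
      · have : theta A B ((m * n) ^ 2) = 0 := by
          apply theta_eq_zero_of_dvd A B hz
          · exact pow_dvd_pow_of_dvd (dvd_mul_left n m) 2
          · positivity
        rw [this]
        push_cast
        simp
    rw [hLHS]
    have hex : ∃ p ∈ n.primeFactors, (theta A B (p ^ (2 * n.factorization p)) : ℝ) = 0 := by
      by_contra hc
      push_neg at hc
      have := theta_fact A B hn0
      rw [show ((theta A B (n^2) : ℕ) : ℝ) = 0 by rw [hz]; norm_num] at this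
      exact absurd this.symm (Finset.prod_ne_zero_iff.mpr hc)
    obtain ⟨p, hpN, hp0⟩ := hex
    have hp0' : theta A B (p ^ (2 * n.factorization p)) = 0 := by exact_mod_cast hp0
    have hprime := Nat.prime_of_mem_primeFactors hpN
    have hfac : ((theta A B (p ^ (2 * n.factorization p)) : ℝ)
        - (theta A B (p ^ (2 * n.factorization p + 2)) : ℝ) / (p : ℝ) ^ 2)
          * (1 + 2 / (p : ℝ))⁻¹ = 0 := by
      have h2 : theta A B (p ^ (2 * n.factorization p + 2)) = 0 :=
        theta_eq_zero_of_dvd A B hp0' (pow_dvd_pow p (by omega)) (pow_ne_zero _ hprime.pos.ne')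
      rw [hp0', h2]
      push_cast
      simp
    rw [Finset.prod_eq_zero hpN hfac, mul_zero]
  · -- main case
    have hθ : ∀ p ∈ n.primeFactors, (theta A B (p ^ (2 * n.factorization p)) : ℝ) ≠ 0 := by
      intro p hp h0
      apply hz
      have := theta_fact A B hn0
      rw [Finset.prod_eq_zero hp h0] at this
      exact_mod_cast this
    -- Euler products
    have hgg : HasProd (fun p : Nat.Primes => ∑' e : ℕ, gg A B n ((p : ℕ) ^ e))
        (∑' m : ℕ, gg A B n m) :=
      EulerProduct.eulerProduct_hasProd (gg_one A B n) (fun {a b} h => gg_mul A B n h)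
        (summable_norm_gg A B n hΔ' hn0) (gg_zero A B n)
    have hgg0 : HasProd (fun p : Nat.Primes => ∑' e : ℕ, gg0 A B n ((p : ℕ) ^ e))
        (∑' m : ℕ, gg0 A B n m) :=
      EulerProduct.eulerProduct_hasProd (gg0_one A B n) (fun {a b} h => gg0_mul A B n h)
        (summable_norm_gg0 A B n hΔ' hn0) (gg0_zero A B n)
    rw [show (fun p : Nat.Primes => ∑' e : ℕ, gg A B n ((p : ℕ) ^ e))
        = fun p : Nat.Primes => 1 + Lp A B n (p : ℕ) from
      funext fun p => tsum_gg_pow A B n p.prop] at hgg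
    rw [show (fun p : Nat.Primes => ∑' e : ℕ, gg0 A B n ((p : ℕ) ^ e))
        = fun p : Nat.Primes => if (p : ℕ) ∣ n then 1 else 1 + Lp A B n (p : ℕ) from
      funext fun p => tsum_gg0_pow A B n p.prop] at hgg0
    -- finite correction product
    set k : Nat.Primes → ℝ := fun p => if (p : ℕ) ∣ n then 1 + Lp A B n (p : ℕ) else 1 with hk
    set TP : Finset Nat.Primes := n.primeFactors.attach.map
      ⟨fun x => (⟨x.1, Nat.prime_of_mem_primeFactors x.2⟩ : Nat.Primes),
        fun x y hxy => Subtype.ext <| by simpa using congrArg Subtype.val hxy⟩ with hTP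
    have hmemTP : ∀ q : Nat.Primes, q ∈ TP ↔ (q : ℕ) ∈ n.primeFactors := by
      intro q
      constructor
      · intro hq
        obtain ⟨x, _, rfl⟩ := Finset.mem_map.mp hq
        exact x.2
      · intro hq
        exact Finset.mem_map.mpr ⟨⟨(q : ℕ), hq⟩, Finset.mem_attach _ _, Subtype.ext rfl⟩
    have hkprod : HasProd k (∏ q ∈ TP, k q) := by
      apply hasProd_prod_of_ne_finset_one
      intro q hq
      rw [hk]
      simp only []
      rw [if_neg]
      intro hdvd
      exact hq ((hmemTP q).mpr (Nat.mem_primeFactors.mpr ⟨q.prop, hdvd, hn0⟩))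
    have hTPval : ∏ q ∈ TP, k q = ∏ p ∈ n.primeFactors, (1 + Lp A B n p) := by
      rw [hTP, Finset.prod_map]
      rw [← Finset.prod_attach n.primeFactors (fun p => 1 + Lp A B n p)]
      apply Finset.prod_congr rfl
      intro x _
      show (if (x.1 : ℕ) ∣ n then 1 + Lp A B n x.1 else 1) = 1 + Lp A B n x.1
      rw [if_pos (Nat.dvd_of_mem_primeFactors x.2)]
    rw [hTPval] at hkprod
    have hcomb : HasProd (fun p : Nat.Primes => 1 + Lp A B n (p : ℕ))
        ((∑' m : ℕ, gg0 A B n m) * ∏ p ∈ n.primeFactors, (1 + Lp A B n p)) := by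
      have := hgg0.mul hkprod
      convert this using 1
      funext q
      show 1 + Lp A B n (q : ℕ) = _ * k q
      rw [hk]
      by_cases hd : (q : ℕ) ∣ n
      · simp only [if_pos hd, one_mul]
      · simp only [if_neg hd, mul_one]
    have hsum_eq : (∑' m : ℕ, gg A B n m)
        = (∑' m : ℕ, gg0 A B n m) * ∏ p ∈ n.primeFactors, (1 + Lp A B n p) :=
      hgg.unique hcomb
    -- statement tprod equals tsum gg0
    have hsubtype : HasProd (fun p : {p : Nat.Primes // ¬ (p : ℕ) ∣ n} =>
        1 - (theta A B ((p : ℕ) ^ 2) : ℝ) / ((p : ℕ) * ((p : ℕ) + 2)))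
        (∑' m : ℕ, gg0 A B n m) := by
      have heq : (fun p : {p : Nat.Primes // ¬ (p : ℕ) ∣ n} =>
          1 - (theta A B ((p : ℕ) ^ 2) : ℝ) / ((p : ℕ) * ((p : ℕ) + 2)))
          = fun p : {p : Nat.Primes // ¬ (p : ℕ) ∣ n} => 1 + Lp A B n ((p : Nat.Primes) : ℕ) := by
        funext p
        rw [Lp, if_neg p.2, sub_eq_add_neg, neg_div]
      rw [heq]
      have : HasProd (Set.mulIndicator {p : Nat.Primes | ¬ (p : ℕ) ∣ n}
          (fun p : Nat.Primes => 1 + Lp A B n (p : ℕ))) (∑' m : ℕ, gg0 A B n m) := by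
        have hind : Set.mulIndicator {p : Nat.Primes | ¬ (p : ℕ) ∣ n}
            (fun p : Nat.Primes => 1 + Lp A B n (p : ℕ))
            = fun p : Nat.Primes => if (p : ℕ) ∣ n then 1 else 1 + Lp A B n (p : ℕ) := by
          funext q
          rw [Set.mulIndicator_apply]
          by_cases hd : (q : ℕ) ∣ n
          · rw [if_neg (by simpa using hd), if_pos hd]
          · rw [if_pos (by simpa using hd), if_neg hd]
        rw [hind]
        exact hgg0
      exact (hasProd_subtype_iff_mulIndicator
        (s := {p : Nat.Primes | ¬ (p : ℕ) ∣ n})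
        (f := fun p : Nat.Primes => 1 + Lp A B n (p : ℕ))).mpr this
    have htprod : (∏' p : {p : Nat.Primes // ¬ (p : ℕ) ∣ n},
        (1 - (theta A B ((p : ℕ) ^ 2) : ℝ) / ((p : ℕ) * ((p : ℕ) + 2))))
        = ∑' m : ℕ, gg0 A B n m := hsubtype.tprod_eq
    -- LHS
    calc (∑' m : ℕ, ((μ m : ℝ) * phi1 (m * n) * phi2 (m * n)
          * (theta A B ((m * n) ^ 2) : ℝ)) / (m : ℝ) ^ 2)
        = ∑' m : ℕ, (∏ p ∈ n.primeFactors,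
            (cp p * (theta A B (p ^ (2 * n.factorization p)) : ℝ))) * gg A B n m :=
          tsum_congr fun m => term_eq A B n hn0 hθ m
      _ = (∏ p ∈ n.primeFactors, (cp p * (theta A B (p ^ (2 * n.factorization p)) : ℝ)))
            * ∑' m : ℕ, gg A B n m := tsum_mul_left
      _ = (∑' m : ℕ, gg0 A B n m)
            * ((∏ p ∈ n.primeFactors, (cp p * (theta A B (p ^ (2 * n.factorization p)) : ℝ)))
              * ∏ p ∈ n.primeFactors, (1 + Lp A B n p)) := by
          rw [hsum_eq]; ring
      _ = (∏' p : {p : Nat.Primes // ¬ (p : ℕ) ∣ n},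
            (1 - (theta A B ((p : ℕ) ^ 2) : ℝ) / ((p : ℕ) * ((p : ℕ) + 2))))
          * ∏ p ∈ n.primeFactors,
              ((theta A B (p ^ (2 * n.factorization p)) : ℝ)
                  - (theta A B (p ^ (2 * n.factorization p + 2)) : ℝ) / (p : ℝ) ^ 2)
                * (1 + 2 / (p : ℝ))⁻¹ := by
          rw [htprod]
          congr 1
          rw [← Finset.prod_mul_distrib]
          apply Finset.prod_congr rfl
          intro p hp
          have hprime := Nat.prime_of_mem_primeFactors hp
          have hppos : (0:ℝ) < (p:ℝ) := by exact_mod_cast hprime.pos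
          have hθp := hθ p hp
          have hcp := cp_eq hprime.pos
          have hinv : (1 + 2 / (p : ℝ))⁻¹ = (p : ℝ) / ((p : ℝ) + 2) := by
            rw [show (1 + 2 / (p:ℝ)) = ((p:ℝ) + 2) / (p:ℝ) by field_simp, inv_div]
          rw [Lp, if_pos (Nat.dvd_of_mem_primeFactors hp), hcp, hinv]
          have hp2 : ((p:ℝ)) + 2 ≠ 0 := by positivity
          field_simp
          ring
end

section
/- Let d ≥ 1 be square-free and let P be a rational point on the twisted elliptic curve E_d : dy² = x³ + Ax + B that is not a 2-torsion point. Then there exists a unique 5-tuple (x, y, z, t, ℓ) ∈ ℤ × ℤ_{≠0} × ℤ_{≥1}³ satisfying z² | t, d = tℓ/z², gcd(xy, t) = 1, and ℓy² = x³ + Axt² + Bt³, such that P has homogeneous coordinates (xt : yz : t²). -/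
/-- `p^k ∣ n` iff `k ≤ v_p(n)`, for nonzero integers. -/
lemma int_pow_dvd_iff {p : ℕ} (hp : p.Prime) {n : ℤ} (hn : n ≠ 0) (k : ℕ) :
    (p : ℤ) ^ k ∣ n ↔ k ≤ n.natAbs.factorization p := by
  rw [show ((p : ℤ)) ^ k = ((p ^ k : ℕ) : ℤ) by push_cast; ring, Int.natCast_dvd,
    Nat.Prime.pow_dvd_iff_le_factorization hp (Int.natAbs_ne_zero.mpr hn)]

lemma auxC (t m z' y' : ℕ) (ht : t ≠ 0) (hm : m ≠ 0) (hz' : z' ≠ 0)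
    (hsq : z' ^ 2 ∣ t) (hcop : Nat.Coprime y' t) (hmul : y' * z' = m) :
    z' = Nat.gcd m t := by
  have hy' : y' ≠ 0 := by rintro rfl; simp at hmul; omega
  have hgcd0 : Nat.gcd m t ≠ 0 := Nat.gcd_ne_zero_right ht
  apply Nat.eq_of_factorization_eq hz' hgcd0
  intro p
  rw [Nat.factorization_gcd hm ht, Finsupp.inf_apply]
  have hsq' : ∀ q, 2 * z'.factorization q ≤ t.factorization q := by
    intro q
    have := (Nat.factorization_le_iff_dvd (pow_ne_zero 2 hz') ht).mpr hsq q
    simpa [Nat.factorization_pow, two_mul, mul_comm] using this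
  have hmfac : m.factorization p = y'.factorization p + z'.factorization p := by
    rw [← hmul, Nat.factorization_mul hy' hz']; simp
  by_cases he : t.factorization p = 0
  · have : z'.factorization p = 0 := by have := hsq' p; omega
    simp [hmfac, he, this]
  · have hp : p.Prime := by
      by_contra h; exact he (Nat.factorization_eq_zero_of_not_prime t h)
    have hpt : p ∣ t := by
      by_contra h; exact he (Nat.factorization_eq_zero_of_not_dvd h)
    have hy0 : y'.factorization p = 0 :=
      Nat.factorization_eq_zero_of_not_dvd (fun h => hp.one_lt.ne' (Nat.eq_one_of_dvd_coprimes hcop h hpt ▸ rfl))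
    have := hsq' p
    rw [hmfac, hy0, zero_add]
    omega

lemma auxB (d t N m : ℕ) (hd : Squarefree d) (ht : t ≠ 0) (hm : m ≠ 0) (hN : N ≠ 0)
    (hcop : Nat.Coprime N t) (heq : t * N = d * m ^ 2) :
    Nat.gcd m t ^ 2 ∣ t ∧ t ∣ d * Nat.gcd m t ^ 2 ∧ Nat.Coprime (m / Nat.gcd m t) t := by
  have hd0 : d ≠ 0 := hd.ne_zero
  set z := Nat.gcd m t with hz
  have hz0 : z ≠ 0 := Nat.gcd_ne_zero_right ht
  have hfac : ∀ p, t.factorization p + N.factorization p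
      = d.factorization p + 2 * m.factorization p := by
    intro p
    have h1 : (t * N).factorization p = (d * m ^ 2).factorization p := by rw [heq]
    rwa [Nat.factorization_mul ht hN, Nat.factorization_mul hd0 (pow_ne_zero 2 hm),
      Nat.factorization_pow, Finsupp.add_apply, Finsupp.add_apply, Finsupp.smul_apply,
      smul_eq_mul] at h1
  have key : ∀ p, t.factorization p ≠ 0 →
      t.factorization p = d.factorization p + 2 * m.factorization p := by
    intro p he
    have hp : p.Prime := by
      by_contra h; exact he (Nat.factorization_eq_zero_of_not_prime t h)
    have hpt : p ∣ t := by
      by_contra h; exact he (Nat.factorization_eq_zero_of_not_dvd h)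
    have hN0 : N.factorization p = 0 := by
      apply Nat.factorization_eq_zero_of_not_dvd
      intro h
      exact hp.one_lt.ne' (Nat.eq_one_of_dvd_coprimes hcop h hpt ▸ rfl)
    have := hfac p; omega
  have hzfac : ∀ p, z.factorization p = min (m.factorization p) (t.factorization p) := by
    intro p; rw [hz, Nat.factorization_gcd hm ht, Finsupp.inf_apply]
  refine ⟨?_, ?_, ?_⟩
  · rw [← Nat.factorization_le_iff_dvd (pow_ne_zero 2 hz0) ht]
    intro p
    rw [Nat.factorization_pow, Finsupp.smul_apply, smul_eq_mul, hzfac p]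
    by_cases he : t.factorization p = 0
    · omega
    · have := key p he; omega
  · rw [← Nat.factorization_le_iff_dvd ht (by positivity)]
    intro p
    rw [Nat.factorization_mul hd0 (pow_ne_zero 2 hz0), Finsupp.add_apply,
      Nat.factorization_pow, Finsupp.smul_apply, smul_eq_mul, hzfac p]
    by_cases he : t.factorization p = 0
    · omega
    · have := key p he; omega
  · by_contra h
    obtain ⟨p, hp, hpd⟩ := Nat.exists_prime_and_dvd h
    have hpm : p ∣ m / z := hpd.trans (Nat.gcd_dvd_left _ _)
    have hpt : p ∣ t := hpd.trans (Nat.gcd_dvd_right _ _)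
    have he : t.factorization p ≠ 0 :=
      (Nat.Prime.factorization_pos_of_dvd hp ht hpt).ne'
    have hdvd : z ∣ m := Nat.gcd_dvd_left _ _
    have hfd : (m / z).factorization p = m.factorization p - z.factorization p := by
      rw [Nat.factorization_div hdvd]; simp
    have hpos := Nat.Prime.factorization_pos_of_dvd hp
      (Nat.div_ne_zero_iff_of_dvd hdvd |>.mpr ⟨hm, hz0⟩) hpm
    have := key p he
    have := hzfac p
    omega

lemma auxA (A B : ℤ) (d : ℕ) (hd : Squarefree d) (hd1 : 1 ≤ d)
    (x₀ y₀ z₀ : ℤ) (hy₀ : y₀ ≠ 0) (hz₀ : 1 ≤ z₀)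
    (hprim : Int.gcd x₀ (Int.gcd y₀ z₀) = 1)
    (heq : (d : ℤ) * y₀ ^ 2 * z₀ = x₀ ^ 3 + A * x₀ * z₀ ^ 2 + B * z₀ ^ 3) :
    ((Int.gcd x₀ z₀ : ℤ)) ^ 2 ∣ z₀ := by
  have hz0 : z₀ ≠ 0 := by omega
  have hzn : z₀.natAbs ≠ 0 := Int.natAbs_ne_zero.mpr hz0
  set g : ℕ := Int.gcd x₀ z₀ with hg
  have hg0 : g ≠ 0 := fun h => hz0 (Int.gcd_eq_zero_iff.mp h).2
  rw [show ((g : ℤ)) ^ 2 = ((g ^ 2 : ℕ) : ℤ) by push_cast; ring, Int.natCast_dvd,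
    ← Nat.factorization_le_iff_dvd (pow_ne_zero 2 hg0) hzn]
  intro p
  rw [Nat.factorization_pow, Finsupp.smul_apply, smul_eq_mul]
  by_cases hp : p.Prime
  swap
  · simp [Nat.factorization_eq_zero_of_not_prime g hp]
  by_cases hpg : p ∣ g
  swap
  · simp [Nat.factorization_eq_zero_of_not_dvd hpg]
  -- p divides x₀ and z₀
  have hpx : (p : ℤ) ∣ x₀ := (Int.natCast_dvd_natCast.mpr hpg).trans (Int.gcd_dvd_left _ _)
  have hpz : (p : ℤ) ∣ z₀ := (Int.natCast_dvd_natCast.mpr hpg).trans (Int.gcd_dvd_right _ _)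
  -- p does not divide y₀
  have hpy : ¬ (p : ℤ) ∣ y₀ := by
    intro h
    have : (p : ℤ) ∣ (Int.gcd y₀ z₀ : ℤ) := Int.dvd_coe_gcd h hpz
    have : (p : ℤ) ∣ (Int.gcd x₀ (Int.gcd y₀ z₀) : ℤ) := Int.dvd_coe_gcd hpx this
    rw [hprim] at this
    exact hp.one_lt.ne' (by exact_mod_cast Int.eq_one_of_dvd_one (by norm_num) this)
  have hyfac : y₀.natAbs.factorization p = 0 :=
    Nat.factorization_eq_zero_of_not_dvd (fun h => hpy (Int.natCast_dvd.mpr h))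
  set b : ℕ := z₀.natAbs.factorization p with hb
  have hb1 : 1 ≤ b := Nat.Prime.factorization_pos_of_dvd hp hzn (Int.natCast_dvd.mp hpz)
  set ε : ℕ := d.factorization p with hε
  have hε1 : ε ≤ 1 := hd.natFactorization_le_one p
  have hd0 : (d : ℤ) ≠ 0 := by exact_mod_cast hd.ne_zero
  have hL0 : (d : ℤ) * y₀ ^ 2 * z₀ ≠ 0 := by
    apply mul_ne_zero (mul_ne_zero hd0 (pow_ne_zero 2 hy₀)) hz0
  -- valuation of the LHS
  have hLfac : ((d : ℤ) * y₀ ^ 2 * z₀).natAbs.factorization p = ε + b := by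
    rw [Int.natAbs_mul, Int.natAbs_mul, Int.natAbs_pow,
      Nat.factorization_mul (by positivity)
        (by simpa using hzn),
      Nat.factorization_mul (by exact_mod_cast hd.ne_zero)
        (pow_ne_zero 2 (Int.natAbs_ne_zero.mpr hy₀)),
      Nat.factorization_pow]
    simp [hyfac, ← hb, ← hε]
  have hLdvd : ∀ k : ℕ, (p : ℤ) ^ k ∣ (d : ℤ) * y₀ ^ 2 * z₀ ↔ k ≤ ε + b := by
    intro k; rw [int_pow_dvd_iff hp hL0, hLfac]
  have hpzb : (p : ℤ) ^ b ∣ z₀ := (int_pow_dvd_iff hp hz0 b).mpr le_rfl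
  -- Step 1: ¬ p^(3b) ∣ x₀^3
  have step1 : ¬ (p : ℤ) ^ (3 * b) ∣ x₀ ^ 3 := by
    intro hdx
    have hpbx : (p : ℤ) ^ b ∣ x₀ := by
      by_cases hx0 : x₀ = 0
      · simp [hx0]
      · rw [int_pow_dvd_iff hp hx0]
        have h3 : 3 * b ≤ (x₀ ^ 3).natAbs.factorization p := by
          rw [← int_pow_dvd_iff hp (pow_ne_zero 3 hx0)]; exact hdx
        rw [Int.natAbs_pow, Nat.factorization_pow] at h3
        simp at h3
        omega
    have h1 : (p : ℤ) ^ (3 * b) ∣ A * x₀ * z₀ ^ 2 := by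
      have : (p : ℤ) ^ (3 * b) ∣ x₀ * z₀ ^ 2 := by
        rw [show 3 * b = b + 2 * b by ring, pow_add]
        exact mul_dvd_mul hpbx (by rw [pow_mul']; exact pow_dvd_pow_of_dvd hpzb 2)
      exact (mul_assoc A x₀ (z₀^2)) ▸ Dvd.dvd.mul_left this A
    have h2 : (p : ℤ) ^ (3 * b) ∣ B * z₀ ^ 3 := by
      have : (p : ℤ) ^ (3 * b) ∣ z₀ ^ 3 := by
        rw [mul_comm, pow_mul]; exact pow_dvd_pow_of_dvd hpzb 3
      exact this.mul_left B
    have hall : (p : ℤ) ^ (3 * b) ∣ (d : ℤ) * y₀ ^ 2 * z₀ := by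
      rw [heq]; exact dvd_add (dvd_add hdx h1) h2
    have := (hLdvd (3 * b)).mp hall
    omega
  -- hence x₀ ≠ 0, and a := v_p x₀ satisfies a < b
  have hx0 : x₀ ≠ 0 := by rintro rfl; exact step1 (by simp)
  set a : ℕ := x₀.natAbs.factorization p with ha
  have ha1 : 1 ≤ a := Nat.Prime.factorization_pos_of_dvd hp (Int.natAbs_ne_zero.mpr hx0)
    (Int.natCast_dvd.mp hpx)
  have hab : a < b := by
    by_contra h
    push_neg at h
    apply step1
    rw [int_pow_dvd_iff hp (pow_ne_zero 3 hx0), Int.natAbs_pow, Nat.factorization_pow]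
    simp
    omega
  -- Step 3: p^(3a) divides the RHS, hence 3a ≤ ε + b
  have hpa : (p : ℤ) ^ a ∣ x₀ := (int_pow_dvd_iff hp hx0 a).mpr le_rfl
  have step3 : 3 * a ≤ ε + b := by
    have h0 : (p : ℤ) ^ (3 * a) ∣ x₀ ^ 3 := by
      rw [mul_comm, pow_mul]; exact pow_dvd_pow_of_dvd hpa 3
    have h1 : (p : ℤ) ^ (3 * a) ∣ A * x₀ * z₀ ^ 2 := by
      have hd1 : (p : ℤ) ^ (a + 2 * b) ∣ x₀ * z₀ ^ 2 := by
        rw [pow_add]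
        exact mul_dvd_mul hpa (by rw [pow_mul']; exact pow_dvd_pow_of_dvd hpzb 2)
      have : (p : ℤ) ^ (3 * a) ∣ x₀ * z₀ ^ 2 :=
        (pow_dvd_pow (p : ℤ) (by omega)).trans hd1
      exact (mul_assoc A x₀ (z₀^2)) ▸ this.mul_left A
    have h2 : (p : ℤ) ^ (3 * a) ∣ B * z₀ ^ 3 := by
      have : (p : ℤ) ^ (3 * a) ∣ z₀ ^ 3 := by
        refine (pow_dvd_pow (p : ℤ) (by omega : 3 * a ≤ 3 * b)).trans ?_
        rw [mul_comm, pow_mul]; exact pow_dvd_pow_of_dvd hpzb 3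
      exact this.mul_left B
    have hall : (p : ℤ) ^ (3 * a) ∣ (d : ℤ) * y₀ ^ 2 * z₀ := by
      rw [heq]; exact dvd_add (dvd_add h0 h1) h2
    exact (hLdvd (3 * a)).mp hall
  -- conclude: 2 * min a b ≤ b
  have hgfac : g.factorization p = min a b := by
    rw [hg, Int.gcd, Nat.factorization_gcd (Int.natAbs_ne_zero.mpr hx0) hzn,
      Finsupp.inf_apply]
  rw [hgfac]
  omega

/-- Coordinates of non-2-torsion rational points on the quadratic twist
`E_d : d y² z = x³ + A x z² + B z³`: every primitive solution `(x₀, y₀, z₀)` with `y₀ ≠ 0` and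
`z₀ ≥ 1` is represented by a unique 5-tuple `(x, y, z, t, ℓ)` with `z² | t`, `d z² = t ℓ`,
`gcd(xy, t) = 1`, `ℓ y² = x³ + A x t² + B t³`, and `P = (xt : yz : t²)` projectively. -/
theorem twist_point_coordinates' (A B : ℤ) (hΔ : -(4 * A ^ 3 + 27 * B ^ 2) ≠ 0)
    (d : ℕ) (hd : Squarefree d) (hd1 : 1 ≤ d)
    (x₀ y₀ z₀ : ℤ) (hy₀ : y₀ ≠ 0) (hz₀ : 1 ≤ z₀)
    (hprim : Int.gcd x₀ (Int.gcd y₀ z₀) = 1)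
    (heq : (d : ℤ) * y₀ ^ 2 * z₀ = x₀ ^ 3 + A * x₀ * z₀ ^ 2 + B * z₀ ^ 3) :
    ∃! T : ℤ × ℤ × ℤ × ℤ × ℤ,
      T.2.1 ≠ 0 ∧ 1 ≤ T.2.2.1 ∧ 1 ≤ T.2.2.2.1 ∧ 1 ≤ T.2.2.2.2 ∧
      T.2.2.1 ^ 2 ∣ T.2.2.2.1 ∧
      (d : ℤ) * T.2.2.1 ^ 2 = T.2.2.2.1 * T.2.2.2.2 ∧
      Int.gcd (T.1 * T.2.1) T.2.2.2.1 = 1 ∧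
      T.2.2.2.2 * T.2.1 ^ 2
        = T.1 ^ 3 + A * T.1 * T.2.2.2.1 ^ 2 + B * T.2.2.2.1 ^ 3 ∧
      ∃ c : ℤ, 0 < c ∧ T.1 * T.2.2.2.1 = c * x₀ ∧ T.2.1 * T.2.2.1 = c * y₀ ∧
        T.2.2.2.1 ^ 2 = c * z₀ := by
  have hz0 : z₀ ≠ 0 := by omega
  have hdZ : (0:ℤ) < (d:ℤ) := by exact_mod_cast hd1
  set g : ℕ := Int.gcd x₀ z₀ with hgdef
  have hg0 : g ≠ 0 := fun h => hz0 (Int.gcd_eq_zero_iff.mp h).2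
  have hgZ0 : (g:ℤ) ≠ 0 := by exact_mod_cast hg0
  have hgZpos : (0:ℤ) < (g:ℤ) := by exact_mod_cast Nat.pos_of_ne_zero hg0
  have hgx : (g:ℤ) ∣ x₀ := Int.gcd_dvd_left _ _
  have hg2z : ((g:ℤ)) ^ 2 ∣ z₀ := auxA A B d hd hd1 x₀ y₀ z₀ hy₀ hz₀ hprim heq
  obtain ⟨c, hcdef⟩ := hg2z
  have hgz : (g:ℤ) ∣ z₀ := Int.gcd_dvd_right _ _
  obtain ⟨t, htdef⟩ := hgz
  obtain ⟨x, hxdef⟩ := hgx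
  have ht1 : 1 ≤ t := by
    have h1 : 1 ≤ (g:ℤ) * t := htdef ▸ hz₀
    by_contra h
    push_neg at h
    have h2 : (g:ℤ) * t ≤ 0 := mul_nonpos_of_nonneg_of_nonpos (by omega) (by omega)
    linarith
  have hc1 : 1 ≤ c := by
    have h1 : 1 ≤ (g:ℤ) ^ 2 * c := hcdef ▸ hz₀
    by_contra h
    push_neg at h
    have h2 : (g:ℤ) ^ 2 * c ≤ 0 := mul_nonpos_of_nonneg_of_nonpos (sq_nonneg _) (by omega)
    linarith
  have ht0 : t ≠ 0 := by omega
  have htc : t = (g:ℤ) * c := by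
    have h : (g:ℤ) * t = (g:ℤ) * ((g:ℤ) * c) := by rw [← htdef, hcdef]; ring
    exact mul_left_cancel₀ hgZ0 h
  -- the reduced x-coordinate fraction
  have hxt_cop : Int.gcd x t = 1 := by
    have h : g = Int.gcd ((g:ℤ) * x) ((g:ℤ) * t) := by rw [← hxdef, ← htdef]
    rw [Int.gcd_mul_left, Int.natAbs_natCast] at h
    have := Nat.eq_of_mul_eq_mul_left (Nat.pos_of_ne_zero hg0)
      (show g * Int.gcd x t = g * 1 by omega)
    omega
  have hxtC : IsCoprime x t := Int.isCoprime_iff_gcd_eq_one.mpr hxt_cop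
  set N : ℤ := x ^ 3 + A * x * t ^ 2 + B * t ^ 3 with hNdef
  set m : ℤ := c * y₀ with hmdef
  have hm0 : m ≠ 0 := mul_ne_zero (by omega) hy₀
  -- the key equation
  have h2 : (d:ℤ) * y₀ ^ 2 * t = (g:ℤ) ^ 2 * N := by
    have h1 : (g:ℤ) * ((d:ℤ) * y₀ ^ 2 * t) = (g:ℤ) * ((g:ℤ) ^ 2 * N) := by
      have := heq
      rw [hxdef, htdef] at this
      linear_combination this
    exact mul_left_cancel₀ hgZ0 h1
  have hkey : t * N = (d:ℤ) * m ^ 2 := by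
    apply mul_left_cancel₀ ht0
    calc t * (t * N) = (g:ℤ) ^ 2 * N * c ^ 2 := by rw [htc]; ring
      _ = ((d:ℤ) * y₀ ^ 2 * t) * c ^ 2 := by rw [h2]
      _ = t * ((d:ℤ) * m ^ 2) := by rw [hmdef]; ring
  have hNpos : 0 < N := by
    have hdm : 0 < (d:ℤ) * m ^ 2 := by positivity
    by_contra h
    push_neg at h
    have h2 : t * N ≤ 0 := mul_nonpos_of_nonneg_of_nonpos (by omega) h
    linarith [hkey ▸ h2]
  have hN0 : N ≠ 0 := by omega
  have hNt : Int.gcd N t = 1 := by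
    apply Int.isCoprime_iff_gcd_eq_one.mp
    have h3 : IsCoprime (x ^ 3) t := hxtC.pow_left
    have hrw : N = x ^ 3 + (A * x * t + B * t ^ 2) * t := by rw [hNdef]; ring
    rw [hrw]
    exact h3.add_mul_right_left _
  -- pass to ℕ
  have htn : ((t.natAbs : ℤ)) = t := Int.natAbs_of_nonneg (by omega)
  have hNn : ((N.natAbs : ℤ)) = N := Int.natAbs_of_nonneg (by omega)
  have htn0 : t.natAbs ≠ 0 := Int.natAbs_ne_zero.mpr ht0
  have hmn0 : m.natAbs ≠ 0 := Int.natAbs_ne_zero.mpr hm0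
  have hNn0 : N.natAbs ≠ 0 := Int.natAbs_ne_zero.mpr hN0
  have heqn : t.natAbs * N.natAbs = d * m.natAbs ^ 2 := by
    have h := congrArg Int.natAbs hkey
    simpa [Int.natAbs_mul, Int.natAbs_pow] using h
  have hcopn : Nat.Coprime N.natAbs t.natAbs := hNt
  obtain ⟨hB1, hB2, hB3⟩ := auxB d t.natAbs N.natAbs m.natAbs hd htn0 hmn0 hNn0 hcopn heqn
  set zn : ℕ := Nat.gcd m.natAbs t.natAbs with hzndef
  have hzn0 : zn ≠ 0 := Nat.gcd_ne_zero_right htn0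
  set z : ℤ := (zn : ℤ) with hzdef
  have hz1 : 1 ≤ z := by rw [hzdef]; exact_mod_cast Nat.one_le_iff_ne_zero.mpr hzn0
  have hz2t : z ^ 2 ∣ t := by
    rw [← htn, hzdef]
    exact_mod_cast hB1
  have htdz : t ∣ (d:ℤ) * z ^ 2 := by
    have h : t ∣ ((d * zn ^ 2 : ℕ) : ℤ) := by rw [← htn]; exact_mod_cast hB2
    push_cast at h
    exact h
  have hzm : z ∣ m := by
    rw [hzdef]
    exact Int.natCast_dvd.mpr (Nat.gcd_dvd_left _ _)
  obtain ⟨y, hydef⟩ := hzm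
  obtain ⟨l, hldef⟩ := htdz
  have hy0 : y ≠ 0 := by
    rintro rfl
    rw [mul_zero] at hydef
    exact hm0 hydef
  have hl1 : 1 ≤ l := by
    have hpos : 0 < t * l := by rw [← hldef]; positivity
    by_contra h
    push_neg at h
    have h2 : t * l ≤ 0 := mul_nonpos_of_nonneg_of_nonpos (by omega) (by omega)
    linarith
  have hleq : l * y ^ 2 = N := by
    apply mul_left_cancel₀ ht0
    calc t * (l * y ^ 2) = ((d:ℤ) * z ^ 2) * y ^ 2 := by rw [hldef]; ring
      _ = (d:ℤ) * m ^ 2 := by rw [hydef]; ring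
      _ = t * N := hkey.symm
  have hyabs : y.natAbs = m.natAbs / zn := by
    have h : m.natAbs = zn * y.natAbs := by
      rw [hydef, Int.natAbs_mul, hzdef, Int.natAbs_natCast]
    rw [h, Nat.mul_div_cancel_left _ (Nat.pos_of_ne_zero hzn0)]
  have hyt_cop : Int.gcd y t = 1 := by
    have : Nat.Coprime y.natAbs t.natAbs := by rw [hyabs]; exact hB3
    exact this
  have hxyt : Int.gcd (x * y) t = 1 := by
    apply Int.isCoprime_iff_gcd_eq_one.mp
    exact IsCoprime.mul_left hxtC (Int.isCoprime_iff_gcd_eq_one.mpr hyt_cop)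
  refine ⟨(x, y, z, t, l), ⟨hy0, hz1, ht1, hl1, hz2t, hldef, hxyt, hleq, c, by omega, ?_, ?_, ?_⟩, ?_⟩
  · -- x * t = c * x₀
    rw [hxdef, htc]; ring
  · -- y * z = c * y₀
    rw [← hmdef, hydef]; ring
  · -- t ^ 2 = c * z₀
    rw [htc, hcdef]; ring
  · -- uniqueness
    rintro ⟨x', y', z', t', l'⟩
      ⟨hy'0, hz'1, ht'1, hl'1, hsq', hdz', hcop', heq', c', hc'pos, hx't', hy'z', ht'sq⟩
    dsimp only at hy'0 hz'1 ht'1 hl'1 hsq' hdz' hcop' heq' hx't' hy'z' ht'sq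
    have ht'0 : t' ≠ 0 := by omega
    have hcopxy' : IsCoprime (x' * y') t' := Int.isCoprime_iff_gcd_eq_one.mpr hcop'
    have hx'C : IsCoprime x' t' := hcopxy'.of_mul_left_left
    have hy'C : IsCoprime y' t' := hcopxy'.of_mul_left_right
    -- t' = t
    have hred' : x' * z₀ = x₀ * t' := by
      have h : t' * (x' * z₀) = t' * (x₀ * t') := by
        linear_combination z₀ * hx't' - x₀ * ht'sq
      exact mul_left_cancel₀ ht'0 h
    have hred : x * z₀ = x₀ * t := by
      rw [hxdef, htdef]; ring
    have hcross : x' * t = x * t' := by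
      have h : z₀ * (x' * t) = z₀ * (x * t') := by
        linear_combination t * hred' - t' * hred
      exact mul_left_cancel₀ hz0 h
    have htt' : t = t' := by
      apply Int.dvd_antisymm (by omega) (by omega)
      · exact (hxtC.symm.dvd_of_dvd_mul_left ⟨x', by linarith⟩)
      · exact (hx'C.symm.dvd_of_dvd_mul_left ⟨x, by linarith⟩)
    have hxx' : x' = x := by
      have h : x' * t = x * t := by rw [hcross, htt']
      exact mul_right_cancel₀ ht0 h
    have hcc' : c' = c := by
      have h : c' * z₀ = c * z₀ := by
        rw [← ht'sq, ← htt', htc, hcdef]; ring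
      exact mul_right_cancel₀ hz0 h
    have hy'z'm : y' * z' = m := by rw [hy'z', hcc', hmdef]
    -- z' = z
    have hz'0 : z' ≠ 0 := by omega
    have hz'abs : ((z'.natAbs : ℤ)) = z' := Int.natAbs_of_nonneg (by omega)
    have hy'abs : Nat.Coprime y'.natAbs t.natAbs := by
      have : Int.gcd y' t' = 1 := Int.isCoprime_iff_gcd_eq_one.mp hy'C
      rw [← htt'] at this
      exact this
    have hsqn : z'.natAbs ^ 2 ∣ t.natAbs := by
      rw [← Int.natAbs_pow]
      exact Int.natAbs_dvd_natAbs.mpr (htt' ▸ hsq')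
    have hmuln : y'.natAbs * z'.natAbs = m.natAbs := by
      rw [← Int.natAbs_mul, hy'z'm]
    have hz'zn : z'.natAbs = zn :=
      auxC t.natAbs m.natAbs z'.natAbs y'.natAbs htn0 hmn0
        (Int.natAbs_ne_zero.mpr hz'0) hsqn hy'abs hmuln
    have hzz' : z' = z := by rw [← hz'abs, hz'zn, hzdef]
    have hyy' : y' = y := by
      have h : y' * z = y * z := by
        calc y' * z = y' * z' := by rw [hzz']
          _ = m := hy'z'm
          _ = y * z := by rw [hydef]; ring
      exact mul_right_cancel₀ (by omega : z ≠ 0) h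
    have hll' : l' = l := by
      have h : t * l' = t * l := by
        rw [← hldef, htt', ← hdz', hzz']
      exact mul_left_cancel₀ ht0 h
    simp only [Prod.mk.injEq]
    exact ⟨hxx', hyy', hzz', htt'.symm, hll'⟩
end
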